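/- Suppose f(t+T, x, y) = f(t, x, y) for all t ∈ ℝ and all x, y, and let x : ℝ → [0,∞)^N be a continuous T-periodic function which is a fixed point of K, i.e. Kx(t) = x(t) for all t ∈ ℝ. Then (1/T)·∫₀^T f(s, x(s), x(s−τ)) ds = 0 and x is differentiable with x'(t) = f(t, x(t), x(t−τ)) for all t ∈ ℝ; in particular, x is a T-periodic solution of the delay differential equation x'(t) = f(t, x(t), x(t−τ)). -/

import Mathlib

open Filter Set intervalIntegral

/-- The Nemitskii operator 𝒩x(t) = f(t, x(t), x(t−τ)). -/
noncomputable def Nem (N : ℕ) (τ : ℝ)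
    (f : ℝ → EuclideanSpace ℝ (Fin N) → EuclideanSpace ℝ (Fin N) → EuclideanSpace ℝ (Fin N))
    (x : ℝ → EuclideanSpace ℝ (Fin N)) (t : ℝ) : EuclideanSpace ℝ (Fin N) :=
  f t (x t) (x (t - τ))

/-- The mean value (1/T)·∫₀ᵀ y(s) ds. -/
noncomputable def meanT (N : ℕ) (T : ℝ)
    (y : ℝ → EuclideanSpace ℝ (Fin N)) : EuclideanSpace ℝ (Fin N) :=
  T⁻¹ • ∫ s in (0:ℝ)..T, y s

/-- The operator Kx(t) = x̄ − t·(𝒩x)‾ + (ℐ𝒩x)(t) − (1/T)·∫₀ᵀ (ℐ𝒩x)(s) ds. -/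
noncomputable def Kop (N : ℕ) (τ T : ℝ)
    (f : ℝ → EuclideanSpace ℝ (Fin N) → EuclideanSpace ℝ (Fin N) → EuclideanSpace ℝ (Fin N))
    (x : ℝ → EuclideanSpace ℝ (Fin N)) (t : ℝ) : EuclideanSpace ℝ (Fin N) :=
  meanT N T x - t • meanT N T (Nem N τ f x)
    + (∫ s in (0:ℝ)..t, Nem N τ f x s)
    - meanT N T (fun s => ∫ u in (0:ℝ)..s, Nem N τ f x u)

/-- a fixed point of K has vanishing mean of the Nemitskii operator
and is a T-periodic solution of the delay differential equation. -/
theorem Kop_fixed_point_is_solution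
(N : ℕ) (hN : 1 ≤ N) (τ : ℝ) (hτ : 0 < τ) (T : ℝ) (hT : 0 < T)
    (f : ℝ → EuclideanSpace ℝ (Fin N) → EuclideanSpace ℝ (Fin N) → EuclideanSpace ℝ (Fin N))
    (hf : ContinuousOn
      (fun p : ℝ × EuclideanSpace ℝ (Fin N) × EuclideanSpace ℝ (Fin N) => f p.1 p.2.1 p.2.2)
      {p | (∀ j, 0 ≤ p.2.1 j) ∧ (∀ j, 0 ≤ p.2.2 j)})
    (hfper : ∀ (t : ℝ) (u v : EuclideanSpace ℝ (Fin N)), f (t + T) u v = f t u v)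
    (x : ℝ → EuclideanSpace ℝ (Fin N))
    (hxc : Continuous x)
    (hxnn : ∀ t, ∀ j, 0 ≤ x t j)
    (hxper : ∀ t, x (t + T) = x t)
    (hfix : ∀ t, Kop N τ T f x t = x t) :
    meanT N T (Nem N τ f x) = 0 ∧
      ∀ t : ℝ, HasDerivAt x (f t (x t) (x (t - τ))) t := by
  have hg : Continuous (Nem N τ f x) := by
    have hc : Continuous fun t : ℝ => ((t, (x t, x (t - τ))) :
        ℝ × EuclideanSpace ℝ (Fin N) × EuclideanSpace ℝ (Fin N)) := by
      refine continuous_id.prodMk (hxc.prodMk (hxc.comp (by continuity)))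
    exact hf.comp_continuous hc (fun t => ⟨hxnn t, hxnn (t - τ)⟩)
  set g := Nem N τ f x with hgdef
  set m := meanT N T (Nem N τ f x) with hm
  set F : ℝ → EuclideanSpace ℝ (Fin N) := fun t => ∫ s in (0:ℝ)..t, g s with hF
  have hFc : Continuous F :=
    intervalIntegral.continuous_primitive (fun a b => hg.intervalIntegrable a b) 0
  set C := meanT N T F with hC
  have hfix' : ∀ t, meanT N T x - t • m + F t - C = x t := fun t => hfix t
  -- integrate the fixed point equation over [0, T]
  have hI1 : IntervalIntegrable (fun t : ℝ => meanT N T x - t • m) MeasureTheory.volume 0 T :=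
    intervalIntegrable_const.sub ((continuous_id'.smul continuous_const).intervalIntegrable _ _)
  have hI2 : IntervalIntegrable (fun t : ℝ => meanT N T x - t • m + F t)
      MeasureTheory.volume 0 T := hI1.add (hFc.intervalIntegrable _ _)
  have hint : (∫ t in (0:ℝ)..T, (meanT N T x - t • m + F t - C))
      = ((T - 0) • meanT N T x - (T ^ 2 / 2 - 0 ^ 2 / 2) • m + (∫ t in (0:ℝ)..T, F t))
        - (T - 0) • C := by
    rw [intervalIntegral.integral_sub hI2 intervalIntegrable_const,
      intervalIntegral.integral_add hI1 (hFc.intervalIntegrable _ _),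
      intervalIntegral.integral_sub (g := fun t : ℝ => t • m) intervalIntegrable_const
        ((continuous_id'.smul continuous_const).intervalIntegrable _ _),
      intervalIntegral.integral_const, intervalIntegral.integral_const,
      intervalIntegral.integral_smul_const, integral_id]
    ring_nf
  have hxint : (∫ t in (0:ℝ)..T, x t) = T • meanT N T x := by
    rw [meanT, smul_smul, mul_inv_cancel₀ hT.ne']
    simp
  have hFint : (∫ t in (0:ℝ)..T, F t) = T • C := by
    rw [hC, meanT, smul_smul, mul_inv_cancel₀ hT.ne']
    simp
  have heq : (∫ t in (0:ℝ)..T, (meanT N T x - t • m + F t - C)) = ∫ t in (0:ℝ)..T, x t := by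
    exact intervalIntegral.integral_congr (fun t _ => hfix' t)
  rw [hint, hxint, hFint] at heq
  have hm0 : m = 0 := by
    have : (T ^ 2 / 2) • m = 0 := by
      have := heq
      simp only [sub_zero] at this
      have h2 : (T • meanT N T x - (T ^ 2 / 2) • m + T • C) - T • C
          = T • meanT N T x := by simpa using this
      have h3 : T • meanT N T x - (T ^ 2 / 2) • m = T • meanT N T x := by
        abel_nf at h2 ⊢
        convert h2 using 2 <;> abel
      exact sub_eq_self.mp h3
    rcases smul_eq_zero.mp this with h | h
    · exact absurd h (by positivity)
    · exact h
  refine ⟨hm0, ?_⟩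
  intro t
  have hFd : HasDerivAt F (g t) t :=
    intervalIntegral.integral_hasDerivAt_right (hg.intervalIntegrable _ _)
      (hg.stronglyMeasurableAtFilter _ _) hg.continuousAt
  have key : ∀ s, x s = meanT N T x + F s - C := by
    intro s
    have := hfix' s
    rw [hm0] at this
    simpa using this.symm
  have : HasDerivAt (fun s => meanT N T x + F s - C) (g t) t :=
    ((hFd.const_add (meanT N T x)).sub_const C)
  exact this.congr_of_eventuallyEq (Filter.Eventually.of_forall key)
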